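/- Let v ∈ L^∞(-1,0; L²(B(1))) satisfy the Type I condition sup_{t∈(-1,0)} (-t)‖∇v(t)‖_{L^∞(B(1))} ≤ C₀ < ∞ and suppose that for every ε > 0 there exists R̃(ε) ∈ (0,1/2] with sup_{t∈(-R̃^{5/2},0)} ∫_{B(y₀,R̃)} |v(t)|² dx ≤ ε for all y₀ ∈ B(1/2) (uniform smallness of local energy). Then for every ε > 0 there exists t₀ = t₀(ε) ∈ (-1,0) such that ‖v(t)‖_{L^∞(B(1/2))} ≤ ε(-t)^{-3/5} for all t ∈ [t₀, 0). -/

import Mathlib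

open MeasureTheory Metric Set

local notation "E3" => EuclideanSpace ℝ (Fin 3)

/-- Under the Type I condition and uniform smallness of the local energy, the `L^∞` norm of
the velocity satisfies `‖v(t)‖_{L^∞(B(1/2))} ≤ ε(-t)^{-3/5}` for `t` close to `0`. -/
theorem stmt8 (v : ℝ → E3 → E3) (C₀ E : ℝ) (hC₀ : 0 ≤ C₀)
    (hdiff : ∀ t ∈ Set.Ioo (-1 : ℝ) 0, DifferentiableOn ℝ (v t) (ball (0 : E3) 1))
    (hL2 : ∀ t ∈ Set.Ioo (-1 : ℝ) 0, (∫ x in ball (0 : E3) 1, ‖v t x‖ ^ 2) ≤ E)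
    (hTypeI : ∀ t ∈ Set.Ioo (-1 : ℝ) 0, ∀ x ∈ ball (0 : E3) 1,
      (-t) * ‖fderivWithin ℝ (v t) (ball (0 : E3) 1) x‖ ≤ C₀)
    (hsmall : ∀ ε > (0 : ℝ), ∃ R ∈ Set.Ioc (0 : ℝ) (1 / 2),
      ∀ y₀ ∈ ball (0 : E3) (1 / 2), ∀ t ∈ Set.Ioo (-(R ^ ((5 : ℝ) / 2))) 0,
        (∫ x in ball y₀ R, ‖v t x‖ ^ 2) ≤ ε) :
    ∀ ε > (0 : ℝ), ∃ t₀ ∈ Set.Ioo (-1 : ℝ) 0,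
      ∀ t ∈ Set.Ico t₀ (0 : ℝ), ∀ x ∈ ball (0 : E3) (1 / 2),
        ‖v t x‖ ≤ ε * (-t) ^ (-(3 : ℝ) / 5) := by
  intro ε hε
  -- constants
  set lam : ℝ := ε / (2 * (C₀ + 1)) with hlam_def
  have hlam : 0 < lam := by positivity
  set c : ℝ := (volume (ball (0 : E3) 1)).toReal with hc_def
  have hc : 0 < c := by
    apply ENNReal.toReal_pos (measure_ball_pos volume 0 one_pos).ne'
    exact (measure_ball_lt_top).ne
  have hε' : (0 : ℝ) < c * lam ^ 3 * (ε / 2) ^ 2 := by positivity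
  obtain ⟨R, hR, hP⟩ := hsmall _ hε'
  have hR0 : (0 : ℝ) < R := hR.1
  set T : ℝ := min (R ^ ((5 : ℝ) / 2)) ((R / lam) ^ ((5 : ℝ) / 2)) with hT_def
  have hT : 0 < T := lt_min (Real.rpow_pos_of_pos hR0 _)
    (Real.rpow_pos_of_pos (by positivity) _)
  have hT1 : T ≤ 1 := by
    refine (min_le_left _ _).trans (Real.rpow_le_one hR0.le ?_ (by norm_num))
    linarith [hR.2]
  refine ⟨-(T / 2), ⟨by linarith, by linarith⟩, ?_⟩
  intro t ht x hx
  have ht1 : t ∈ Set.Ioo (-1 : ℝ) 0 := ⟨by linarith [ht.1], ht.2⟩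
  set s : ℝ := -t with hs_def
  have hs : 0 < s := by simp [hs_def]; exact ht.2
  have hsT : s < T := by
    have : -(T / 2) ≤ t := ht.1
    simp only [hs_def]; linarith
  have hsR : s < R ^ ((5 : ℝ) / 2) := hsT.trans_le (min_le_left _ _)
  set u : ℝ := s ^ ((2 : ℝ) / 5) with hu_def
  have hu : 0 < u := Real.rpow_pos_of_pos hs _
  set w : ℝ := s ^ (-(3 : ℝ) / 5) with hw_def
  have hw : 0 < w := Real.rpow_pos_of_pos hs _
  set r : ℝ := lam * u with hr_def
  have hr : 0 < r := by positivity
  -- r < R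
  have hrR : r < R := by
    have h1 : s < (R / lam) ^ ((5 : ℝ) / 2) := hsT.trans_le (min_le_right _ _)
    have h2 : u < ((R / lam) ^ ((5 : ℝ) / 2)) ^ ((2 : ℝ) / 5) :=
      Real.rpow_lt_rpow hs.le h1 (by norm_num)
    have h3 : ((R / lam) ^ ((5 : ℝ) / 2)) ^ ((2 : ℝ) / 5) = R / lam := by
      rw [← Real.rpow_mul (by positivity)]
      norm_num
    rw [h3] at h2
    calc r = lam * u := hr_def
    _ < lam * (R / lam) := by exact (mul_lt_mul_iff_right₀ hlam).mpr h2
    _ = R := by field_simp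
  -- u / s = w  and  u^3 * w^2 = 1
  have huw : u = w * s := by
    rw [hu_def, hw_def]
    rw [show ((2 : ℝ) / 5) = -(3 : ℝ)/5 + 1 by norm_num, Real.rpow_add hs, Real.rpow_one]
  have hu3w2 : u ^ 3 * w ^ 2 = 1 := by
    rw [hu_def, hw_def, ← Real.rpow_natCast (s ^ ((2:ℝ)/5)) 3,
      ← Real.rpow_natCast (s ^ (-(3:ℝ)/5)) 2, ← Real.rpow_mul hs.le, ← Real.rpow_mul hs.le,
      ← Real.rpow_add hs]
    norm_num
  -- inclusion of balls
  have hxlt : ‖x‖ < 1 / 2 := by simpa [mem_ball, dist_eq_norm] using hx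
  have hsub : closedBall x R ⊆ ball (0 : E3) 1 := by
    intro y hy
    simp only [mem_closedBall, dist_eq_norm] at hy
    simp only [mem_ball, dist_eq_norm, sub_zero]
    calc ‖y‖ = ‖y - x + x‖ := by rw [sub_add_cancel]
    _ ≤ ‖y - x‖ + ‖x‖ := norm_add_le _ _
    _ < R + 1/2 := by linarith
    _ ≤ 1 := by linarith [hR.2]
  -- integrability
  have hcont : ContinuousOn (fun y => ‖v t y‖ ^ 2) (closedBall x R) :=
    (((hdiff t ht1).continuousOn.mono hsub).norm).pow 2
  have hintR : IntegrableOn (fun y => ‖v t y‖ ^ 2) (ball x R) :=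
    (hcont.integrableOn_compact (isCompact_closedBall x R)).mono_set ball_subset_closedBall
  have hintr : IntegrableOn (fun y => ‖v t y‖ ^ 2) (ball x r) :=
    hintR.mono_set (ball_subset_ball hrR.le)
  -- energy bound on ball x r
  have henergy : (∫ y in ball x r, ‖v t y‖ ^ 2) ≤ c * lam ^ 3 * (ε / 2) ^ 2 := by
    have h1 : (∫ y in ball x r, ‖v t y‖ ^ 2) ≤ ∫ y in ball x R, ‖v t y‖ ^ 2 := by
      apply setIntegral_mono_set hintR
      · filter_upwards with y using by positivity
      · exact HasSubset.Subset.eventuallyLE (ball_subset_ball hrR.le)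
    refine h1.trans (hP x hx t ⟨?_, ht.2⟩)
    simp only [hs_def] at hsR; linarith
  -- Lipschitz bound
  have hlip : ∀ y ∈ ball (0 : E3) 1, ‖v t y - v t x‖ ≤ C₀ / s * ‖y - x‖ := by
    intro y hy
    refine (convex_ball (0 : E3) 1).norm_image_sub_le_of_norm_fderivWithin_le (hdiff t ht1)
      (fun z hz => ?_) (hsub (mem_closedBall_self hR0.le)) hy
    have := hTypeI t ht1 z hz
    rw [div_eq_inv_mul, le_inv_mul_iff₀ hs]
    exact this
  -- main estimate
  have hClam : C₀ * lam ≤ ε / 2 := by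
    rw [hlam_def, mul_div_assoc']
    rw [div_le_div_iff₀ (by positivity) (by norm_num)]
    nlinarith
  by_cases hcase : ‖v t x‖ ≤ C₀ * lam * w + ε / 2 * w
  · calc ‖v t x‖ ≤ C₀ * lam * w + ε / 2 * w := hcase
    _ ≤ ε / 2 * w + ε / 2 * w := by nlinarith
    _ = ε * w := by ring
  · exfalso
    push_neg at hcase
    set M : ℝ := ‖v t x‖ - C₀ * lam * w with hM_def
    have hM : ε / 2 * w < M := by rw [hM_def]; linarith
    have hMpos : 0 < M := lt_trans (by positivity) hM
    -- pointwise lower bound on ball x r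
    have hpt : ∀ y ∈ ball x r, M ^ 2 ≤ ‖v t y‖ ^ 2 := by
      intro y hy
      have hyD : y ∈ ball (0 : E3) 1 := hsub ((ball_subset_ball hrR.le).trans
        ball_subset_closedBall hy)
      have hd : ‖y - x‖ < r := by simpa [mem_ball, dist_eq_norm] using hy
      have h2 : ‖v t y - v t x‖ ≤ C₀ / s * r := by
        refine (hlip y hyD).trans ?_
        apply mul_le_mul_of_nonneg_left hd.le (by positivity)
      have h3 : C₀ / s * r = C₀ * lam * w := by
        rw [hr_def, huw]; field_simp
      have h4 : M ≤ ‖v t y‖ := by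
        have := norm_sub_norm_le (v t x) (v t y)
        rw [norm_sub_rev] at h2
        rw [hM_def]
        rw [h3] at h2
        linarith
      exact pow_le_pow_left₀ hMpos.le h4 2
    have hvol : (volume (ball x r)).toReal = r ^ 3 * c := by
      rw [Measure.addHaar_ball volume x hr.le, finrank_euclideanSpace_fin,
        ENNReal.toReal_mul, ENNReal.toReal_ofReal (by positivity), hc_def]
    have hlow : M ^ 2 * (r ^ 3 * c) ≤ ∫ y in ball x r, ‖v t y‖ ^ 2 := by
      rw [← hvol]
      exact setIntegral_ge_of_const_le_real measurableSet_ball (measure_ball_lt_top).ne hpt hintr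
    have hkey : M ^ 2 * u ^ 3 ≤ (ε / 2) ^ 2 := by
      have h5 : M ^ 2 * u ^ 3 * (c * lam ^ 3) ≤ (ε / 2) ^ 2 * (c * lam ^ 3) := by
        calc M ^ 2 * u ^ 3 * (c * lam ^ 3) = M ^ 2 * (r ^ 3 * c) := by rw [hr_def]; ring
        _ ≤ ∫ y in ball x r, ‖v t y‖ ^ 2 := hlow
        _ ≤ c * lam ^ 3 * (ε / 2) ^ 2 := henergy
        _ = (ε / 2) ^ 2 * (c * lam ^ 3) := by ring
      exact le_of_mul_le_mul_right h5 (by positivity)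
    have hfin : M ^ 2 ≤ (ε / 2 * w) ^ 2 := by
      calc M ^ 2 = M ^ 2 * (u ^ 3 * w ^ 2) := by rw [hu3w2]; ring
      _ = M ^ 2 * u ^ 3 * w ^ 2 := by ring
      _ ≤ (ε / 2) ^ 2 * w ^ 2 := mul_le_mul_of_nonneg_right hkey (by positivity)
      _ = (ε / 2 * w) ^ 2 := by ring
    have h7 : (ε / 2 * w) ^ 2 < M ^ 2 := by
      apply pow_lt_pow_left₀ hM (by positivity) two_ne_zero
    linarith
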